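/- For every k ≥ 1, the number of words over a fixed k-letter alphabet that are minimal of Zimin type 2 is m(2,k) = k! · Σ_{i=0}^{k-1} 2^{k-1-i} / i! = Σ_{i=0}^{k-1} (k!/i!) · 2^{k-1-i}. -/

import Mathlib

open List Filter

/-- The Zimin pattern `Z_k` as a word over variables `0, 1, ..., k-1`
(`Z_0` is empty, `Z_{k+1} = Z_k · x_{k+1} · Z_k`). -/
def ziminWord : ℕ → List ℕ
  | 0 => []
  | k + 1 => ziminWord k ++ k :: ziminWord k

/-- `w` is the image of the Zimin pattern `Z_k` under a non-erasing morphism. -/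
def IsZiminImage {α : Type*} (k : ℕ) (w : List α) : Prop :=
  ∃ h : ℕ → List α, (∀ i, h i ≠ []) ∧ w = (ziminWord k).flatMap h

/-- The Zimin type of `w`: the maximum `k` such that `w` is an image of `Z_k`
under a non-erasing morphism (0 for the empty word). -/
noncomputable def ziminType {α : Type*} (w : List α) : ℕ :=
  sSup {k | IsZiminImage k w}

/-- The Zimin pattern `Z_k` embeds in `w`: some factor of `w` is an image of `Z_k`. -/
def ziminEmbeds {α : Type*} (k : ℕ) (w : List α) : Prop :=
  ∃ u : List α, u <:+: w ∧ IsZiminImage k u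

/-- Length of the longest border (proper prefix that is also a proper suffix) of `w`. -/
noncomputable def bordLen {α : Type*} (w : List α) : ℕ :=
  sSup {j | w.take j <:+ w ∧ j < w.length}

/-- Length of the longest short border (border of length `< |w|/2`) of `w`. -/
noncomputable def shortBordLen {α : Type*} (w : List α) : ℕ :=
  sSup {j | w.take j <:+ w ∧ 2 * j < w.length}

/-- The longest border of `w`. -/
noncomputable def bord {α : Type*} (w : List α) : List α := w.take (bordLen w)

/-- The longest short border of `w`. -/
noncomputable def shortBord {α : Type*} (w : List α) : List α := w.take (shortBordLen w)

/-- The Fibonacci words over `Bool` (`a = false`, `b = true`), with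
`fibWord 0 = F_0 = a`, `fibWord 1 = F_1 = F_0 F_{-1} = ab`, `F_{n} = F_{n-1} F_{n-2}`. -/
def fibWord : ℕ → List Bool
  | 0 => [false]
  | 1 => [false, true]
  | n + 2 => fibWord (n + 1) ++ fibWord n

/-- The Fibonacci numbers `Φ_n = |F_n|` (`Φ_0 = 1, Φ_1 = 2, Φ_2 = 3, ...`). -/
def Phi (n : ℕ) : ℕ := (fibWord n).length

/-- The infinite Fibonacci word `F_∞` (0-indexed letters). -/
def fibInf (i : ℕ) : Bool := (fibWord (i + 2)).getD i false

/-- The prefix `F_∞[1..n]` of the infinite Fibonacci word. -/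
def fibPrefix (n : ℕ) : List Bool := (List.range n).map fibInf


/-- A word of Zimin type `n` is minimal if every proper factor has Zimin type
strictly less than `n`. -/
def IsMinimalZimin {α : Type*} (n : ℕ) (w : List α) : Prop :=
  ziminType w = n ∧ ∀ u : List α, u <:+: w → u ≠ w → ziminType u < n

/-- `m(n,k)`: the number of `k`-ary minimal words of Zimin type `n`. -/
noncomputable def mcount (n k : ℕ) : ℕ :=
  {w : List (Fin k) | IsMinimalZimin n w}.ncard


section Words

variable {α : Type*}

/-- The "square-sandwich" pattern `u v u`. -/
def PatP (w : List α) : Prop := ∃ u v : List α, u ≠ [] ∧ v ≠ [] ∧ w = u ++ v ++ u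

/-- Structural description of minimal Zimin-2 words. -/
def MinW (w : List α) : Prop :=
  (∃ (c : α) (l : List α), l ≠ [] ∧ w = c :: (l ++ [c])) ∧
    ∀ (c : α) (l : List α), l ≠ [] → (c :: (l ++ [c])) <:+: w → c :: (l ++ [c]) = w

def blk (p : α × Bool) : List α := p.1 :: (if p.2 then [p.1] else [])

def blks (bs : List (α × Bool)) : List α := bs.flatMap blk

lemma blk_ne_nil (p : α × Bool) : blk p ≠ [] := by simp [blk]

lemma blk_length_le (p : α × Bool) : (blk p).length ≤ 2 := by
  unfold blk; split <;> simp

lemma mem_blk {x : α} {p : α × Bool} (h : x ∈ blk p) : x = p.1 := by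
  unfold blk at h; split at h <;> simp_all

lemma blks_cons (p : α × Bool) (bs : List (α × Bool)) :
    blks (p :: bs) = blk p ++ blks bs := by simp [blks]

lemma mem_blks {x : α} {bs : List (α × Bool)} (h : x ∈ blks bs) : x ∈ bs.map Prod.fst := by
  simp only [blks, List.mem_flatMap] at h
  obtain ⟨p, hp, hx⟩ := h
  exact List.mem_map.2 ⟨p, hp, (mem_blk hx).symm⟩

lemma fst_mem_blks {x : α} {bs : List (α × Bool)} (h : x ∈ bs.map Prod.fst) : x ∈ blks bs := by
  obtain ⟨p, hp, rfl⟩ := List.mem_map.1 h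
  exact List.mem_flatMap.2 ⟨p, hp, by simp [blk]⟩

lemma blks_ne_nil {bs : List (α × Bool)} (h : bs ≠ []) : blks bs ≠ [] := by
  cases bs with
  | nil => simp at h
  | cons p bs => simp [blks_cons, blk_ne_nil p]

lemma infix_append_cases {s A B : List α} (h : s <:+: A ++ B) :
    s <:+: A ∨ s <:+: B ∨
      ∃ s1 s2, s = s1 ++ s2 ∧ s1 ≠ [] ∧ s2 ≠ [] ∧ s1 <:+ A ∧ s2 <+: B := by
  obtain ⟨p, t, hw⟩ := h
  rw [List.append_assoc] at hw
  rcases List.append_eq_append_iff.1 hw with ⟨a', hA, hB⟩ | ⟨c', hp, hB⟩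
  · -- A = p ++ a', s ++ t = a' ++ B
    rcases List.append_eq_append_iff.1 hB with ⟨x, ha', ht⟩ | ⟨y, hs, hBt⟩
    · -- a' = s ++ x, t = x ++ B ⇒ s infix of A
      left; exact ⟨p, x, by rw [hA, ha', List.append_assoc]⟩
    · -- s = a' ++ y, B = y ++ t
      rcases eq_or_ne a' [] with rfl | ha
      · right; left; exact ⟨[], t, by simp [hs, hBt]⟩
      · rcases eq_or_ne y [] with rfl | hy
        · left
          refine ⟨p, [], ?_⟩
          simp only [List.append_nil]
          rw [hA, hs, List.append_nil]
        · right; right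
          exact ⟨a', y, hs, ha, hy, ⟨p, hA.symm⟩, ⟨t, hBt.symm⟩⟩
  · -- p = A ++ c', B = c' ++ (s ++ t)
    right; left
    exact ⟨c', t, by rw [hB, List.append_assoc]⟩

lemma getLast?_clc (c : α) (l : List α) : (c :: (l ++ [c])).getLast? = some c := by
  have : c :: (l ++ [c]) = (c :: l) ++ [c] := by simp
  rw [this, List.getLast?_concat]

/-- No factor `c l c` (with `l ≠ []`) occurs in a block word with distinct block letters. -/
lemma no_clc_blks : ∀ {bs : List (α × Bool)}, (bs.map Prod.fst).Nodup →
    ∀ {c : α} {l : List α}, l ≠ [] → ¬ (c :: (l ++ [c])) <:+: blks bs := by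
  intro bs
  induction bs with
  | nil =>
    intro _ c l hl hinf
    have := hinf.length_le
    simp [blks] at this
  | cons p bs ih =>
    intro hnd c l hl hinf
    rw [blks_cons] at hinf
    have hnd' : (bs.map Prod.fst).Nodup := (List.nodup_cons.1 (by simpa using hnd)).2
    have hp1 : p.1 ∉ bs.map Prod.fst := (List.nodup_cons.1 (by simpa using hnd)).1
    rcases infix_append_cases hinf with h | h | ⟨s1, s2, hs, h1, h2, hsuf, hpre⟩
    · have h3 := h.length_le
      have h4 := blk_length_le p
      simp only [List.length_cons, List.length_append, List.length_singleton] at h3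
      have : 1 ≤ l.length := List.length_pos_iff.2 hl
      omega
    · exact ih hnd' hl h
    · -- s1 nonempty suffix of blk p, s2 nonempty prefix of blks bs
      obtain ⟨x, s1', rfl⟩ : ∃ x s1', s1 = x :: s1' := by
        cases s1 with
        | nil => exact absurd rfl h1
        | cons x s1' => exact ⟨x, s1', rfl⟩
      rw [List.cons_append] at hs
      injection hs with hx hs'
      subst hx
      have hcp : c = p.1 := mem_blk (hsuf.subset (List.mem_cons_self))
      -- getLast of s is c, and lies in s2
      have hlast : (l ++ [c]).getLast? = some c := List.getLast?_concat
      rw [hs', List.getLast?_append_of_ne_nil _ h2] at hlast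
      have hcs2 : c ∈ s2 := by
        obtain ⟨h', he⟩ := List.mem_getLast?_eq_getLast hlast
        exact he ▸ List.getLast_mem h'
      have : c ∈ blks bs := hpre.subset hcs2
      exact hp1 (hcp ▸ mem_blks this)

end Words
section Words2

open List
variable {α : Type*}

/-- Any word with no `c l c` factor (`l ≠ []`) decomposes into blocks with distinct letters. -/
lemma exists_blks : ∀ (n : ℕ) (l : List α), l.length ≤ n →
    (∀ (c : α) (x : List α), x ≠ [] → ¬ (c :: (x ++ [c])) <:+: l) →
    ∃ bs : List (α × Bool), l = blks bs ∧ (bs.map Prod.fst).Nodup := by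
  intro n
  induction n with
  | zero =>
    intro l hl _
    have : l = [] := List.eq_nil_of_length_eq_zero (Nat.le_zero.1 hl)
    exact ⟨[], by simp [this, blks], by simp⟩
  | succ n ih =>
    intro l hl hno
    match l with
    | [] => exact ⟨[], by simp [blks], by simp⟩
    | [d] => exact ⟨[(d, false)], by simp [blks, blk], by simp⟩
    | d :: e :: rest =>
      by_cases hde : d = e
      · subst hde
        -- l = d :: d :: rest
        have hrest : rest.length ≤ n := by simp at hl; omega
        have hnor : ∀ (c : α) (x : List α), x ≠ [] → ¬ (c :: (x ++ [c])) <:+: rest := by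
          intro c x hx hinf
          exact hno c x hx (hinf.trans ⟨[d, d], [], by simp⟩)
        obtain ⟨bs, rfl, hnd⟩ := ih rest hrest hnor
        have hd : d ∉ bs.map Prod.fst := by
          intro hmem
          obtain ⟨u, v, huv⟩ := List.append_of_mem (fst_mem_blks hmem)
          refine hno d (d :: u) (by simp) ?_
          exact ⟨[], v, by simp [huv]⟩
        exact ⟨(d, true) :: bs, by simp [blks_cons, blk], by simp [hd, hnd]⟩
      · -- l = d :: t with t = e :: rest, head t ≠ d
        have ht : (e :: rest).length ≤ n := by simp at hl ⊢; omega
        have hnot : ∀ (c : α) (x : List α), x ≠ [] → ¬ (c :: (x ++ [c])) <:+: (e :: rest) := by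
          intro c x hx hinf
          exact hno c x hx (hinf.trans ⟨[d], [], by simp⟩)
        obtain ⟨bs, hbs, hnd⟩ := ih (e :: rest) ht hnot
        have hd : d ∉ bs.map Prod.fst := by
          intro hmem
          have hdm : d ∈ e :: rest := hbs ▸ fst_mem_blks hmem
          rcases List.mem_cons.1 hdm with h | h
          · exact hde h
          · obtain ⟨u, v, huv⟩ := List.append_of_mem h
            refine hno d (e :: u) (by simp) ?_
            exact ⟨[], v, by simp [huv]⟩
        refine ⟨(d, false) :: bs, by simp [blks_cons, blk, hbs], by simp [hd, hnd]⟩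

/-- Block decompositions with distinct letters are unique. -/
lemma blks_inj : ∀ {bs bs' : List (α × Bool)}, (bs.map Prod.fst).Nodup →
    (bs'.map Prod.fst).Nodup → blks bs = blks bs' → bs = bs' := by
  intro bs
  induction bs with
  | nil =>
    intro bs' _ _ h
    cases bs' with
    | nil => rfl
    | cons q bs' =>
      exfalso
      have : blks (q :: bs') = [] := h.symm.trans (by simp [blks])
      exact blks_ne_nil (by simp) this
  | cons p bs ih =>
    intro bs' hnd hnd' h
    cases bs' with
    | nil =>
      exfalso
      exact blks_ne_nil (by simp) (h.trans (by simp [blks]))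
    | cons q bs' =>
      obtain ⟨p1, p2⟩ := p
      obtain ⟨q1, q2⟩ := q
      simp only [blks_cons, blk] at h
      injection h with h1 h2
      subst h1
      have hybp : p1 ∉ bs.map Prod.fst := (List.nodup_cons.1 (by simpa using hnd)).1
      have hybq : p1 ∉ bs'.map Prod.fst := (List.nodup_cons.1 (by simpa using hnd')).1
      have hndb : (bs.map Prod.fst).Nodup := (List.nodup_cons.1 (by simpa using hnd)).2
      have hndb' : (bs'.map Prod.fst).Nodup := (List.nodup_cons.1 (by simpa using hnd')).2
      cases p2 <;> cases q2 <;> simp only [Bool.false_eq_true, if_true, if_false] at h2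
      · -- both false
        rw [ih hndb hndb' (by simpa using h2)]
      · -- p2 = false, q2 = true : blks bs = p1 :: blks bs'
        exfalso
        simp only [List.append_eq, List.nil_append, List.singleton_append] at h2
        have : p1 ∈ blks bs := by rw [h2]; exact List.mem_cons_self
        exact hybp (mem_blks this)
      · -- p2 = true, q2 = false
        exfalso
        simp only [List.append_eq, List.nil_append, List.singleton_append] at h2
        have : p1 ∈ blks bs' := by rw [← h2]; exact List.mem_cons_self
        exact hybq (mem_blks this)
      · -- both true
        injection h2 with _ h3
        rw [ih hndb hndb' h3]

end Words2
section ZiminFacts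

open List
variable {α : Type*}

lemma length_le_flatMap {h : ℕ → List α} (hne : ∀ i, h i ≠ []) :
    ∀ l : List ℕ, l.length ≤ (l.flatMap h).length := by
  intro l
  induction l with
  | nil => simp
  | cons a l ih =>
    rw [List.flatMap_cons, List.length_append, List.length_cons]
    have : 1 ≤ (h a).length := List.length_pos_iff.2 (hne a)
    omega

lemma le_length_ziminWord (n : ℕ) : n ≤ (ziminWord n).length := by
  induction n with
  | zero => simp
  | succ n ih =>
    show n + 1 ≤ (ziminWord (n+1)).length
    rw [show ziminWord (n+1) = ziminWord n ++ n :: ziminWord n from rfl]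
    simp only [List.length_append, List.length_cons]
    omega

lemma IsZiminImage.le_length {n : ℕ} {w : List α} (h : IsZiminImage n w) : n ≤ w.length := by
  obtain ⟨f, hne, rfl⟩ := h
  exact (le_length_ziminWord n).trans (length_le_flatMap hne _)

lemma bddAbove_zimin (w : List α) : BddAbove {n | IsZiminImage n w} :=
  ⟨w.length, fun _ hn => hn.le_length⟩

lemma isZiminImage_two_iff {w : List α} : IsZiminImage 2 w ↔ PatP w := by
  constructor
  · rintro ⟨f, hne, rfl⟩
    refine ⟨f 0, f 1, hne 0, hne 1, ?_⟩
    show (ziminWord 2).flatMap f = f 0 ++ f 1 ++ f 0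
    rw [show ziminWord 2 = [0, 1, 0] from rfl]
    simp
  · rintro ⟨u, v, hu, hv, rfl⟩
    refine ⟨fun i => if i = 0 then u else v, fun i => by show (if i = 0 then u else v) ≠ []; split_ifs <;> assumption, ?_⟩
    rw [show ziminWord 2 = [0, 1, 0] from rfl]
    simp

lemma patP_of_isZiminImage {n : ℕ} {w : List α} (hn : 2 ≤ n) (h : IsZiminImage n w) :
    PatP w := by
  obtain ⟨m, rfl⟩ : ∃ m, n = m + 2 := ⟨n - 2, by omega⟩
  obtain ⟨f, hne, rfl⟩ := h
  rw [show ziminWord (m + 2) = ziminWord (m+1) ++ (m+1) :: ziminWord (m+1) from rfl]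
  refine ⟨(ziminWord (m+1)).flatMap f, f (m+1), ?_, hne _, ?_⟩
  · intro hnil
    have h1 := length_le_flatMap hne (ziminWord (m+1))
    have h2 := le_length_ziminWord (m+1)
    rw [hnil] at h1
    simp only [List.length_nil, Nat.le_zero] at h1
    omega
  · simp

lemma exists_proper_factor_of_isZiminImage {n : ℕ} {w : List α} (hn : 3 ≤ n)
    (h : IsZiminImage n w) : ∃ u, u <:+: w ∧ u ≠ w ∧ PatP u := by
  obtain ⟨m, rfl⟩ : ∃ m, n = m + 3 := ⟨n - 3, by omega⟩
  obtain ⟨f, hne, rfl⟩ := h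
  refine ⟨(ziminWord (m+2)).flatMap f, ?_, ?_, patP_of_isZiminImage (by omega) ⟨f, hne, rfl⟩⟩
  · refine ⟨[], (f (m+2) ++ (ziminWord (m+2)).flatMap f), ?_⟩
    rw [show ziminWord (m + 3) = ziminWord (m+2) ++ (m+2) :: ziminWord (m+2) from rfl]
    simp
  · intro heq
    have := congrArg List.length heq
    rw [show ziminWord (m + 3) = ziminWord (m+2) ++ (m+2) :: ziminWord (m+2) from rfl] at this
    simp only [List.flatMap_append, List.flatMap_cons, List.length_append] at this
    have : 1 ≤ (f (m+2)).length := List.length_pos_iff.2 (hne _)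
    omega

lemma zimin_set_nonempty [Nonempty α] (w : List α) : {n | IsZiminImage n w}.Nonempty := by
  obtain x := Classical.arbitrary α
  cases w with
  | nil => exact ⟨0, ⟨fun _ => [x], fun i => by simp, by simp [ziminWord]⟩⟩
  | cons a t =>
    refine ⟨1, ⟨fun _ => a :: t, fun i => by simp, ?_⟩⟩
    rw [show ziminWord 1 = [0] from rfl]
    simp

lemma ziminType_le_one_iff [Nonempty α] {u : List α} : ziminType u ≤ 1 ↔ ¬ PatP u := by
  constructor
  · intro h hP
    have h2 : (2 : ℕ) ∈ {n | IsZiminImage n u} := isZiminImage_two_iff.2 hP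
    have := le_csSup (bddAbove_zimin u) h2
    rw [ziminType] at h
    omega
  · intro hP
    refine csSup_le (zimin_set_nonempty u) ?_
    intro n hn
    by_contra hn1
    exact hP (patP_of_isZiminImage (by omega) hn)

lemma isMinimalZimin_two_iff [Nonempty α] {w : List α} :
    IsMinimalZimin 2 w ↔ (PatP w ∧ ∀ u, u <:+: w → u ≠ w → ¬ PatP u) := by
  constructor
  · rintro ⟨ht, hf⟩
    constructor
    · have : ziminType w ∈ {n | IsZiminImage n w} :=
        Nat.sSup_mem (zimin_set_nonempty w) (bddAbove_zimin w)
      rw [ht] at this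
      exact isZiminImage_two_iff.1 this
    · intro u hu hne
      exact ziminType_le_one_iff.1 (by have := hf u hu hne; omega)
  · rintro ⟨hP, hf⟩
    constructor
    · refine le_antisymm ?_ ?_
      · refine csSup_le (zimin_set_nonempty w) ?_
        intro n hn
        by_contra hn2
        obtain ⟨u, hu, hne, hPu⟩ :=
          exists_proper_factor_of_isZiminImage (by omega) hn
        exact hf u hu hne hPu
      · exact le_csSup (bddAbove_zimin w) (isZiminImage_two_iff.2 hP)
    · intro u hu hne
      have := ziminType_le_one_iff.2 (hf u hu hne)
      omega

/-- `P` with witnesses gives a prefix of the form `c (m) c`. -/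
lemma patP_decomp {w : List α} (h : PatP w) :
    ∃ (c : α) (m t : List α), m ≠ [] ∧ w = (c :: (m ++ [c])) ++ t := by
  obtain ⟨u, v, hu, hv, rfl⟩ := h
  obtain ⟨c, u', rfl⟩ : ∃ c u', u = c :: u' := by
    cases u with
    | nil => exact absurd rfl hu
    | cons c u' => exact ⟨c, u', rfl⟩
  refine ⟨c, u' ++ v, u', by simp [hv], ?_⟩
  simp

lemma isMin_iff_minW {w : List α} :
    (PatP w ∧ ∀ u, u <:+: w → u ≠ w → ¬ PatP u) ↔ MinW w := by
  constructor
  · rintro ⟨hP, hf⟩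
    have key : ∀ (c : α) (l : List α), l ≠ [] → (c :: (l ++ [c])) <:+: w →
        c :: (l ++ [c]) = w := by
      intro c l hl hinf
      by_contra hne
      exact hf _ hinf hne ⟨[c], l, by simp, hl, by simp⟩
    constructor
    · obtain ⟨c, m, t, hm, hw⟩ := patP_decomp hP
      have hpre : (c :: (m ++ [c])) <:+: w := ⟨[], t, by simp [hw]⟩
      exact ⟨c, m, hm, (key c m hm hpre).symm⟩
    · exact key
  · rintro ⟨⟨c, l, hl, rfl⟩, hkey⟩
    constructor
    · exact ⟨[c], l, by simp, hl, by simp⟩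
    · intro u hu hne hPu
      obtain ⟨d, m, t, hm, hud⟩ := patP_decomp hPu
      have hinf : (d :: (m ++ [d])) <:+: (c :: (l ++ [c])) :=
        List.IsInfix.trans ⟨[], t, by simp [hud]⟩ hu
      have heq := hkey d m hm hinf
      have h1 : u.length < (c :: (l ++ [c])).length := by
        refine lt_of_le_of_ne hu.length_le ?_
        intro hlen
        exact hne (hu.sublist.eq_of_length hlen)
      have h2 : (d :: (m ++ [d])).length ≤ u.length := by
        rw [hud]; simp
      have h3 := congrArg List.length heq
      omega
  end ZiminFacts
section Count

open List

/-- Index type for minimal Zimin-2 words. -/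
abbrev TT (k : ℕ) := Σ r : Fin k, (Fin ((r : ℕ) + 1) ↪ Fin k) × (Fin (r : ℕ) → Bool)

/-- Encoding of minimal Zimin-2 words over `Fin k`. -/
def fT (k : ℕ) (x : TT k) : List (Fin k) :=
  if ((x.1 : ℕ) = 0) then [x.2.1 0, x.2.1 0, x.2.1 0]
  else x.2.1 0 :: (blks (List.ofFn fun i => (x.2.1 i.succ, x.2.2 i)) ++ [x.2.1 0])

lemma nodup_enc {n k : ℕ} (e : Fin (n + 1) ↪ Fin k) (j : Fin n → Bool) :
    ((List.ofFn fun i : Fin n => (e i.succ, j i)).map Prod.fst).Nodup := by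
  rw [List.map_ofFn]
  exact List.nodup_ofFn.2 (fun i i' hii => (Fin.succ_injective _) (e.injective hii))

lemma mem_enc {n k : ℕ} {e : Fin (n + 1) ↪ Fin k} {j : Fin n → Bool} {a : Fin k}
    (h : a ∈ (List.ofFn fun i : Fin n => (e i.succ, j i)).map Prod.fst) :
    ∃ i : Fin n, e i.succ = a := by
  rw [List.map_ofFn, List.mem_ofFn] at h
  obtain ⟨i, hi⟩ := h
  exact ⟨i, hi⟩

lemma not_mem_enc {n k : ℕ} (e : Fin (n + 1) ↪ Fin k) (j : Fin n → Bool) :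
    e 0 ∉ blks (List.ofFn fun i : Fin n => (e i.succ, j i)) := by
  intro hmem
  obtain ⟨i, hi⟩ := mem_enc (mem_blks hmem)
  exact Fin.succ_ne_zero i (e.injective hi)

lemma minW_fT {k : ℕ} (x : TT k) : MinW (fT k x) := by
  obtain ⟨r, e, j⟩ := x
  by_cases hr : (r : ℕ) = 0
  · simp only [fT]
    rw [if_pos hr]
    constructor
    · exact ⟨e 0, [e 0], by simp, by simp⟩
    · intro c l hl hinf
      have h1 := hinf.length_le
      have h2 : 1 ≤ l.length := List.length_pos_iff.2 hl
      refine hinf.sublist.eq_of_length ?_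
      simp only [List.length_cons, List.length_append, List.length_singleton] at h1 ⊢
      omega
  · simp only [fT]
    rw [if_neg hr]
    have hnd : ((List.ofFn fun i => (e i.succ, j i)).map Prod.fst).Nodup := nodup_enc e j
    have haB : e 0 ∉ blks (List.ofFn fun i => (e i.succ, j i)) := not_mem_enc e j
    have hBne : blks (List.ofFn fun i => (e i.succ, j i)) ≠ [] := by
      apply blks_ne_nil
      intro hnil
      have := congrArg List.length hnil
      simp at this
      exact hr this
    set B := blks (List.ofFn fun i => (e i.succ, j i)) with hB
    constructor
    · exact ⟨e 0, B, hBne, rfl⟩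
    · intro c l hl hinf
      have hw : e 0 :: (B ++ [e 0]) = ([e 0] ++ B) ++ [e 0] := by simp
      rw [hw] at hinf
      have h2l : 1 ≤ l.length := List.length_pos_iff.2 hl
      rcases infix_append_cases hinf with h | h | ⟨s1, s2, hs, h1, h2, hsuf, hpre⟩
      · exfalso
        rcases infix_append_cases h with h' | h' | ⟨t1, t2, hts, ht1, ht2, htsuf, htpre⟩
        · have hle := h'.length_le
          simp only [List.length_cons, List.length_append, List.length_singleton] at hle
          omega
        · exact no_clc_blks hnd hl h'
        · have ht1a : t1 = [e 0] := by
            refine htsuf.eq_of_length ?_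
            have hle := htsuf.length_le
            have : 1 ≤ t1.length := List.length_pos_iff.2 ht1
            simp only [List.length_singleton] at hle ⊢
            omega
          rw [ht1a] at hts
          simp only [List.singleton_append] at hts
          injection hts with hc ht2'
          have hcs : c ∈ t2 := by rw [← ht2']; simp
          have := htpre.subset hcs
          rw [hc] at this
          exact haB this
      · exfalso
        have := h.length_le
        simp only [List.length_cons, List.length_append, List.length_singleton] at this
        omega
      · have hs2 : s2 = [e 0] := by
          refine hpre.eq_of_length ?_
          have hle := hpre.length_le
          have : 1 ≤ s2.length := List.length_pos_iff.2 h2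
          simp only [List.length_singleton] at hle ⊢
          omega
        rw [hs2] at hs
        have hs' : (c :: l) ++ [c] = s1 ++ [e 0] := by simpa using hs
        have hlen2 : ([c] : List (Fin k)).length = ([e 0] : List (Fin k)).length := by simp
        obtain ⟨hs1, hca⟩ := List.append_inj' hs' hlen2
        have hca' : c = e 0 := by simpa using hca
        obtain ⟨t, ht⟩ := hsuf
        rw [← hs1] at ht
        cases t with
        | nil =>
          simp only [List.nil_append, List.singleton_append] at ht
          injection ht with h1' h2'
          rw [hca', h2']
        | cons x xs =>
          exfalso
          simp only [List.cons_append, List.singleton_append] at ht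
          injection ht with hx hxs
          have hcB : c ∈ B := by
            have hm : c ∈ xs ++ c :: l := by simp
            rw [hxs] at hm
            simpa using hm
          rw [hca'] at hcB
          exact haB hcB

lemma fT_inj (k : ℕ) : Function.Injective (fT k) := by
  rintro ⟨r, e, j⟩ ⟨r', e', j'⟩ h
  simp only [fT] at h
  have hz : ((0 : Fin ((r : ℕ) + 1)) : ℕ) = 0 := rfl
  have hz' : ((0 : Fin ((r' : ℕ) + 1)) : ℕ) = 0 := rfl
  by_cases hr : (r : ℕ) = 0 <;> by_cases hr' : (r' : ℕ) = 0
  · rw [if_pos hr, if_pos hr'] at h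
    injection h with h0 h'
    obtain rfl : r = r' := Fin.ext (by omega)
    have he : e = e' := by
      apply DFunLike.ext
      intro i
      have hi : i = 0 := Fin.ext (by have := i.isLt; omega)
      rw [hi]; exact h0
    have hj : j = j' := by
      funext i
      exact absurd i.isLt (by omega)
    rw [he, hj]
  · exfalso
    rw [if_pos hr, if_neg hr'] at h
    injection h with h0 h1
    have h1' : [e 0] ++ [e 0] = blks (List.ofFn fun i => (e' i.succ, j' i)) ++ [e' 0] := by
      simpa [h0] using h1
    rw [show ([e 0] : List (Fin k)) = [e' 0] from by rw [h0]] at h1'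
    have hbl : [e' 0] = blks (List.ofFn fun i => (e' i.succ, j' i)) :=
      List.append_cancel_right h1'
    have : e' 0 ∈ blks (List.ofFn fun i => (e' i.succ, j' i)) := by
      rw [← hbl]; simp
    exact not_mem_enc e' j' this
  · exfalso
    rw [if_neg hr, if_pos hr'] at h
    injection h with h0 h1
    have h1' : blks (List.ofFn fun i => (e i.succ, j i)) ++ [e 0] = [e 0] ++ [e 0] := by
      simpa [h0] using h1
    have hbl : blks (List.ofFn fun i => (e i.succ, j i)) = [e 0] :=
      List.append_cancel_right (by simpa using h1')
    have : e 0 ∈ blks (List.ofFn fun i => (e i.succ, j i)) := by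
      rw [hbl]; simp
    exact not_mem_enc e j this
  · rw [if_neg hr, if_neg hr'] at h
    injection h with h0 h1
    rw [h0] at h1
    have hb := List.append_cancel_right h1
    have hbs := blks_inj (nodup_enc e j) (nodup_enc e' j') hb
    have hlen : (r : ℕ) = (r' : ℕ) := by
      have := congrArg List.length hbs
      simpa using this
    obtain rfl : r = r' := Fin.ext hlen
    have hfun := List.ofFn_inj.1 hbs
    have he : e = e' := by
      apply DFunLike.ext
      intro i
      induction i using Fin.cases with
      | zero => exact h0
      | succ i => exact congrArg Prod.fst (congrFun hfun i)
    have hj : j = j' := by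
      funext i
      exact congrArg Prod.snd (congrFun hfun i)
    rw [he, hj]

lemma minW_mem_range {k : ℕ} (hk : 1 ≤ k) {w : List (Fin k)} (h : MinW w) :
    ∃ x : TT k, fT k x = w := by
  obtain ⟨⟨c, l, hl, rfl⟩, hkey⟩ := h
  by_cases hc : c ∈ l
  · obtain ⟨l1, l2, rfl⟩ := List.append_of_mem hc
    have h1 : l1 = [] := by
      by_contra h1
      have hinf : (c :: (l1 ++ [c])) <:+: (c :: ((l1 ++ c :: l2) ++ [c])) :=
        ⟨[], l2 ++ [c], by simp⟩
      have heq := hkey c l1 h1 hinf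
      have := congrArg List.length heq
      simp at this
    subst h1
    have h2 : l2 = [] := by
      by_contra h2
      have hinf : (c :: (l2 ++ [c])) <:+: (c :: (([] ++ c :: l2) ++ [c])) :=
        ⟨[c], [], by simp⟩
      have heq := hkey c l2 h2 hinf
      have := congrArg List.length heq
      simp at this
    subst h2
    have hvr : ((⟨0, hk⟩ : Fin k) : ℕ) = 0 := rfl
    refine ⟨⟨⟨0, hk⟩, ⟨fun _ => c, fun a b _ => Fin.ext (by
      have ha := a.isLt; have hb := b.isLt
      omega)⟩, fun i => absurd i.isLt (by omega)⟩, ?_⟩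
    simp [fT]; rfl
  · have hno : ∀ (d : Fin k) (x : List (Fin k)), x ≠ [] → ¬ (d :: (x ++ [d])) <:+: l := by
      intro d x hx hinf
      have hinf' : (d :: (x ++ [d])) <:+: (c :: (l ++ [c])) :=
        hinf.trans ⟨[c], [c], by simp⟩
      have heq := hkey d x hx hinf'
      have h1 := congrArg List.length heq
      have h2 := hinf.length_le
      simp only [List.length_cons, List.length_append, List.length_singleton] at h1 h2
      omega
    obtain ⟨bs, hbs, hnd⟩ := exists_blks l.length l le_rfl hno
    subst hbs
    have hcbs : c ∉ bs.map Prod.fst := fun hm => hc (fst_mem_blks hm)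
    have hbsne : bs ≠ [] := by rintro rfl; exact hl (by simp [blks])
    have hrk : bs.length < k := by
      have hnd2 : (c :: bs.map Prod.fst).Nodup := List.nodup_cons.2 ⟨hcbs, hnd⟩
      have := hnd2.length_le_card
      simp only [List.length_cons, List.length_map, Fintype.card_fin] at this
      omega
    have hget : ∀ (m : Fin bs.length), (bs.get m).1
        = (bs.map Prod.fst)[(m : ℕ)]'(by simpa using m.isLt) := by
      intro m
      simp [List.get_eq_getElem]
    have hinj : Function.Injective (Fin.cons c (fun i => (bs.get i).1) :
        Fin (bs.length + 1) → Fin k) := by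
      refine Fin.cons_injective_iff.2 ⟨?_, ?_⟩
      · rintro ⟨i, hi⟩
        exact hcbs (hi ▸ List.mem_map.2 ⟨bs.get i, List.get_mem bs i, rfl⟩)
      · intro i i' hii
        apply Fin.ext
        have hii' : (bs.get i).1 = (bs.get i').1 := hii
        rw [hget i, hget i'] at hii'
        exact (hnd.getElem_inj_iff).1 hii'
    refine ⟨⟨⟨bs.length, hrk⟩, ⟨Fin.cons c (fun i => (bs.get i).1), hinj⟩,
      fun i => (bs.get i).2⟩, ?_⟩
    have hvr : ((⟨bs.length, hrk⟩ : Fin k) : ℕ) = bs.length := rfl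
    simp only [fT]
    have hcond : ¬ (((⟨bs.length, hrk⟩ : Fin k) : ℕ) = 0) := by simpa using hbsne
    rw [if_neg hcond]
    simp only [Function.Embedding.coeFn_mk, Fin.cons_zero, Fin.cons_succ]
    have hofn : (List.ofFn fun i : Fin bs.length => ((bs.get i).1, (bs.get i).2)) = bs := by
      have h1 : (fun i : Fin bs.length => ((bs.get i).1, (bs.get i).2))
          = fun i => bs.get i := by
        funext i; exact rfl
      rw [h1]
      simp [List.get_eq_getElem]
    rw [hofn]

end Count
lemma range_fT_eq (k : ℕ) (hk : 1 ≤ k) :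
    {w : List (Fin k) | IsMinimalZimin 2 w} = Set.range (fT k) := by
  have : Nonempty (Fin k) := ⟨⟨0, hk⟩⟩
  ext w
  simp only [Set.mem_setOf_eq, Set.mem_range]
  rw [isMinimalZimin_two_iff, isMin_iff_minW]
  constructor
  · exact fun h => minW_mem_range hk h
  · rintro ⟨x, rfl⟩
    exact minW_fT x


/-- Lemma 10: the number of `k`-ary minimal words of Zimin type 2 is
`m(2,k) = Σ_{i=0}^{k-1} (k!/i!) · 2^{k-1-i}`. -/
theorem mcount_two (k : ℕ) (hk : 1 ≤ k) :
    mcount 2 k = ∑ i ∈ Finset.range k,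
      (Nat.factorial k / Nat.factorial i) * 2 ^ (k - 1 - i) := by
  simp only [mcount]
  rw [range_fT_eq k hk, ← Nat.card_coe_set_eq,
    Nat.card_range_of_injective (fT_inj k), Nat.card_eq_fintype_card,
    Fintype.card_sigma]
  have hcard : ∀ r : Fin k,
      Fintype.card ((Fin ((r : ℕ) + 1) ↪ Fin k) × (Fin (r : ℕ) → Bool))
        = Nat.descFactorial k ((r : ℕ) + 1) * 2 ^ (r : ℕ) := by
    intro r
    rw [Fintype.card_prod, Fintype.card_embedding_eq, Fintype.card_fun]
    simp
  simp_rw [hcard]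
  rw [Fin.sum_univ_eq_sum_range (fun r => Nat.descFactorial k (r + 1) * 2 ^ r) k]
  rw [← Finset.sum_range_reflect
    (fun i => Nat.factorial k / Nat.factorial i * 2 ^ (k - 1 - i)) k]
  refine Finset.sum_congr rfl ?_
  intro r hr
  have hrk : r < k := Finset.mem_range.1 hr
  have h2 : k - 1 - (k - 1 - r) = r := by omega
  rw [h2, Nat.descFactorial_eq_div (by omega : r + 1 ≤ k),
    show k - (r + 1) = k - 1 - r by omega]
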